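/- Let F be a field and let χ ∈ F be nonzero with χ² ≠ 1, and set M = !![0, 1; -1, χ + χ⁻¹], a 2×2 matrix over F. Then for every natural number n, M^n = 1 if and only if χ^n = 1. In particular, if χ has finite multiplicative order then the order of M in the monoid of 2×2 matrices equals orderOf χ. -/

import Mathlib

theorem rotation_matrix_pow_eq_one_iff (F : Type*) [Field F] (χ : F) (hχ0 : χ ≠ 0)
    (hχ1 : χ ^ 2 ≠ 1) :
    (∀ n : ℕ, (!![0, 1; -1, χ + χ⁻¹] : Matrix (Fin 2) (Fin 2) F) ^ n = 1 ↔ χ ^ n = 1) ∧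
      (IsOfFinOrder χ →
        orderOf (!![0, 1; -1, χ + χ⁻¹] : Matrix (Fin 2) (Fin 2) F) = orderOf χ) := by
  set M : Matrix (Fin 2) (Fin 2) F := !![0, 1; -1, χ + χ⁻¹] with hM
  set P : Matrix (Fin 2) (Fin 2) F := !![1, 1; χ, χ⁻¹] with hP
  set D : Matrix (Fin 2) (Fin 2) F := Matrix.diagonal ![χ, χ⁻¹] with hD
  have hne : χ⁻¹ - χ ≠ 0 := by
    intro h
    apply hχ1
    have : χ⁻¹ = χ := by linear_combination h
    field_simp at this
    linear_combination -this
  have hdet : P.det ≠ 0 := by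
    simp [hP, Matrix.det_fin_two_of]
    intro h
    exact hne (by linear_combination h)
  have hdetU : IsUnit P.det := isUnit_iff_ne_zero.2 hdet
  have hPu : IsUnit P := (Matrix.isUnit_iff_isUnit_det P).2 (isUnit_iff_ne_zero.2 hdet)
  have hMP : M * P = P * D := by
    ext i j
    fin_cases i <;> fin_cases j <;>
      simp [hM, hP, hD, Matrix.mul_apply, Fin.sum_univ_two, Matrix.diagonal] <;>
      field_simp <;> ring
  have hiter : ∀ n : ℕ, M ^ n * P = P * D ^ n := by
    intro n
    induction n with
    | zero => simp
    | succ n ih =>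
      rw [pow_succ, pow_succ, mul_assoc, hMP, ← mul_assoc, ih, mul_assoc]
  have hDpow : ∀ n : ℕ, D ^ n = Matrix.diagonal ![χ ^ n, χ⁻¹ ^ n] := by
    intro n
    have hv : (![χ, χ⁻¹] : Fin 2 → F) ^ n = ![χ ^ n, χ⁻¹ ^ n] := by
      funext i
      fin_cases i <;> simp [Pi.pow_apply]
    rw [hD, Matrix.diagonal_pow, hv]
  have key : ∀ n : ℕ, M ^ n = 1 ↔ χ ^ n = 1 := by
    intro n
    constructor
    · intro h
      have := hiter n
      rw [h, one_mul] at this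
      have hDn : D ^ n = 1 := by
        have h2 := congrArg (fun X => P⁻¹ * X) this
        simpa [← mul_assoc, Matrix.nonsing_inv_mul _ hdetU] using h2.symm
      rw [hDpow] at hDn
      have := congrFun (congrFun hDn 0) 0
      simpa [Matrix.diagonal, Matrix.one_apply] using this
    · intro h
      have hDn : D ^ n = 1 := by
        rw [hDpow]
        have h2 : χ⁻¹ ^ n = 1 := by
          rw [inv_pow, h, inv_one]
        rw [h, h2]
        ext i j
        fin_cases i <;> fin_cases j <;> simp [Matrix.diagonal, Matrix.one_apply]
      have := hiter n
      rw [hDn, mul_one] at this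
      calc M ^ n = M ^ n * (P * P⁻¹) := by rw [Matrix.mul_nonsing_inv _ hdetU, mul_one]
        _ = P * P⁻¹ := by rw [← mul_assoc, this]
        _ = 1 := Matrix.mul_nonsing_inv _ hdetU
  refine ⟨key, fun _ => ?_⟩
  exact orderOf_eq_orderOf_iff.2 key
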